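/- Let P be a submonoid of a group and suppose the family of constructible right ideals 𝔍 has the property: for S₁, S₂ ∈ 𝔍 with S₁ ⊊ S₂ and any s₁ ∈ S₁, there exists s₂ ∈ S₂ \ S₁ with s₂ ≤ s₁. Then for any S, S₁, …, S_n ∈ 𝔍 with S \ (S₁ ∪ ⋯ ∪ S_n) nonempty, and any s ∈ ⋃ⱼ (S ∩ Sⱼ), there exists s̄ ∈ S \ (S₁ ∪ ⋯ ∪ S_n) with s̄ ≤ s. -/
import Mathlib


theorem stmt_11 {G : Type*} [Group G] (P : Submonoid G) (𝔍 : Set (Set G))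
    (hsub : ∀ S ∈ 𝔍, S ⊆ (P : Set G))
    (hideal : ∀ S ∈ 𝔍, ∀ s ∈ S, ∀ p ∈ P, s * p ∈ S)
    (hcap : ∀ S ∈ 𝔍, ∀ T ∈ 𝔍, S ∩ T ∈ 𝔍)
    (hprop : ∀ S₁ ∈ 𝔍, ∀ S₂ ∈ 𝔍, S₁ ⊂ S₂ → ∀ s₁ ∈ S₁,
      ∃ s₂ ∈ S₂ \ S₁, ∃ t ∈ P, s₁ = s₂ * t)
    (S : Set G) (hS : S ∈ 𝔍) (nn : ℕ) (Si : Fin nn → Set G) (hSi : ∀ i, Si i ∈ 𝔍)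
    (hne : (S \ ⋃ i, Si i).Nonempty) :
    ∀ s ∈ ⋃ i, S ∩ Si i, ∃ sbar ∈ S \ ⋃ i, Si i, ∃ t ∈ P, s = sbar * t := by
  classical
  obtain ⟨x, hxS, hxU⟩ := hne
  suffices h : ∀ k : ℕ, ∀ s ∈ S, (Finset.univ.filter (fun i => s ∈ Si i)).card ≤ k →
      ∃ sbar ∈ S \ ⋃ i, Si i, ∃ t ∈ P, s = sbar * t by
    intro s hs
    rw [Set.mem_iUnion] at hs
    obtain ⟨i, hiS, _⟩ := hs
    exact h _ s hiS le_rfl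
  intro k
  induction k with
  | zero =>
    intro s hsS hcard
    refine ⟨s, ⟨hsS, ?_⟩, 1, one_mem P, (mul_one s).symm⟩
    rw [Set.mem_iUnion]
    rintro ⟨i, hi⟩
    have hmem : i ∈ Finset.univ.filter (fun i => s ∈ Si i) := by
      simp [hi]
    have := Finset.card_pos.mpr ⟨i, hmem⟩
    omega
  | succ k ih =>
    intro s hsS hcard
    by_cases hU : s ∈ ⋃ i, Si i
    · rw [Set.mem_iUnion] at hU
      obtain ⟨j, hj⟩ := hU
      have hmem : S ∩ Si j ∈ 𝔍 := hcap S hS (Si j) (hSi j)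
      have hss : S ∩ Si j ⊂ S := by
        refine ⟨Set.inter_subset_left, fun hsub' => ?_⟩
        exact hxU (Set.mem_iUnion.mpr ⟨j, (hsub' hxS).2⟩)
      obtain ⟨s', ⟨hs'S, hs'n⟩, t, htP, hst⟩ := hprop _ hmem _ hS hss s ⟨hsS, hj⟩
      have hs'j : s' ∉ Si j := fun h => hs'n ⟨hs'S, h⟩
      have hsubf : Finset.univ.filter (fun i => s' ∈ Si i) ⊆
          (Finset.univ.filter (fun i => s ∈ Si i)).erase j := by
        intro i hi
        simp only [Finset.mem_filter, Finset.mem_univ, true_and] at hi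
        rw [Finset.mem_erase]
        refine ⟨fun hij => hs'j (hij ▸ hi), ?_⟩
        simp only [Finset.mem_filter, Finset.mem_univ, true_and]
        rw [hst]
        exact hideal (Si i) (hSi i) s' hi t htP
      have hjmem : j ∈ Finset.univ.filter (fun i => s ∈ Si i) := by simp [hj]
      have hcard' : (Finset.univ.filter (fun i => s' ∈ Si i)).card ≤ k := by
        have h1 := Finset.card_le_card hsubf
        have h2 := Finset.card_erase_of_mem hjmem
        have h3 := Finset.card_pos.mpr ⟨j, hjmem⟩
        omega
      obtain ⟨sbar, hsbar, t₂, ht₂P, hs't₂⟩ := ih s' hs'S hcard'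
      exact ⟨sbar, hsbar, t₂ * t, mul_mem ht₂P htP, by rw [hst, hs't₂, mul_assoc]⟩
    · exact ⟨s, ⟨hsS, hU⟩, 1, one_mem P, (mul_one s).symm⟩
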